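/- arXiv:2103.04149 — 10 statements merged into one kernel-verified Lean document; each statement's English description precedes it below -/
import Mathlib

section
/- For every n ≥ 1, the space of n×n real matrices decomposes as a direct sum ℝ^{n×n} = S_n ⊕ V_n; that is, every n×n real matrix M can be written uniquely as M = S + V with S ∈ S_n and V ∈ V_n. -/
open Matrix Finset

/-- An `n × n` real matrix has the constant sum property (is of type S) if there is a
weight `w` such that every row sum and every column sum equals `n * w`. -/
def IsTypeS {n : ℕ} (M : Matrix (Fin n) (Fin n) ℝ) : Prop :=
  ∃ w : ℝ, (∀ i, ∑ j, M i j = n * w) ∧ (∀ j, ∑ i, M i j = n * w)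

/-- An `n × n` real matrix has the vertex cross sum property (is of type V) if
`M i j + M k l = M i l + M k j` for all indices and all entries sum to zero. -/
def IsTypeV {n : ℕ} (M : Matrix (Fin n) (Fin n) ℝ) : Prop :=
  (∀ i j k l, M i j + M k l = M i l + M k j) ∧ (∑ i, ∑ j, M i j = 0)

/-- `ℝ^{n×n} = S_n ⊕ V_n`: every square real matrix decomposes uniquely as the sum of a
type S matrix and a type V matrix. -/
theorem sv_direct_sum_decomposition (n : ℕ) (hn : 1 ≤ n)
    (M : Matrix (Fin n) (Fin n) ℝ) :
    ∃! SV : Matrix (Fin n) (Fin n) ℝ × Matrix (Fin n) (Fin n) ℝ,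
      IsTypeS SV.1 ∧ IsTypeV SV.2 ∧ M = SV.1 + SV.2 := by
  have hn0 : (n : ℝ) ≠ 0 := Nat.cast_ne_zero.mpr (by omega)
  set T : ℝ := ∑ i, ∑ j, M i j with hT
  have hTc : ∑ j, ∑ i, M i j = T := Finset.sum_comm ..
  set V : Matrix (Fin n) (Fin n) ℝ :=
    Matrix.of (fun i j => (∑ l, M i l) / n + (∑ k, M k j) / n - 2 * T / n ^ 2) with hVdef
  have hVij : ∀ i j, V i j = (∑ l, M i l) / n + (∑ k, M k j) / n - 2 * T / n ^ 2 :=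
    fun i j => rfl
  have hVrow : ∀ i, ∑ j, V i j = (∑ l, M i l) - T / n := by
    intro i
    simp only [hVij]
    rw [Finset.sum_sub_distrib, Finset.sum_add_distrib, Finset.sum_const,
      Finset.card_univ, Fintype.card_fin, ← Finset.sum_div, hTc]
    simp only [nsmul_eq_mul, Finset.sum_const, Finset.card_univ, Fintype.card_fin]
    field_simp
    ring
  have hVcol : ∀ j, ∑ i, V i j = (∑ k, M k j) - T / n := by
    intro j
    simp only [hVij]
    rw [Finset.sum_sub_distrib, Finset.sum_add_distrib, Finset.sum_const,
      Finset.card_univ, Fintype.card_fin, ← Finset.sum_div, ← hT]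
    simp only [nsmul_eq_mul, Finset.sum_const, Finset.card_univ, Fintype.card_fin]
    field_simp
    ring
  have hVsum0 : ∑ i, ∑ j, V i j = 0 := by
    rw [Finset.sum_congr rfl fun i _ => hVrow i, Finset.sum_sub_distrib,
      Finset.sum_const, Finset.card_univ, Fintype.card_fin, ← hT]
    simp only [nsmul_eq_mul]
    field_simp
    ring
  refine ⟨(M - V, V), ⟨⟨T / n ^ 2, ?_, ?_⟩, ⟨?_, hVsum0⟩, ?_⟩, ?_⟩
  · intro i
    have : ∑ j, (M - V) i j = (∑ j, M i j) - ∑ j, V i j := by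
      simp [Matrix.sub_apply, Finset.sum_sub_distrib]
    rw [this, hVrow]
    field_simp
    ring
  · intro j
    have : ∑ i, (M - V) i j = (∑ i, M i j) - ∑ i, V i j := by
      simp [Matrix.sub_apply, Finset.sum_sub_distrib]
    rw [this, hVcol]
    field_simp
    ring
  · intro i j k l
    simp only [hVij]
    ring
  · simp
  · rintro ⟨S', V'⟩ ⟨⟨w', hSrow, hScol⟩, ⟨hcross, hVsum'⟩, hM⟩
    have hMij : ∀ i j, M i j = S' i j + V' i j := fun i j => by rw [hM]; rfl
    have hrowV' : ∀ i, ∑ l, V' i l = (∑ l, M i l) - n * w' := by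
      intro i
      have h1 : ∑ l, M i l = ∑ l, (S' i l + V' i l) :=
        Finset.sum_congr rfl fun l _ => hMij i l
      rw [Finset.sum_add_distrib, hSrow i] at h1
      linarith
    have hcolV' : ∀ j, ∑ k, V' k j = (∑ k, M k j) - n * w' := by
      intro j
      have h1 : ∑ k, M k j = ∑ k, (S' k j + V' k j) :=
        Finset.sum_congr rfl fun k _ => hMij k j
      rw [Finset.sum_add_distrib, hScol j] at h1
      linarith
    have hw' : T = n ^ 2 * w' := by
      have h1 : T = ∑ i, ∑ j, (S' i j + V' i j) :=
        Finset.sum_congr rfl fun i _ => Finset.sum_congr rfl fun j _ => hMij i j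
      have h2 : ∀ i, ∑ j, (S' i j + V' i j) = n * w' + ∑ j, V' i j := by
        intro i; rw [Finset.sum_add_distrib, hSrow i]
      rw [Finset.sum_congr rfl fun i _ => h2 i, Finset.sum_add_distrib, hVsum',
        Finset.sum_const, Finset.card_univ, Fintype.card_fin] at h1
      simpa [nsmul_eq_mul, pow_two, mul_assoc] using h1
    have hV'eq : V' = V := by
      funext i j
      have key : (n : ℝ) ^ 2 * V' i j
          = n * (∑ l, V' i l) + n * (∑ k, V' k j) - ∑ k, ∑ l, V' k l := by
        have h1 : (n : ℝ) ^ 2 * V' i j = ∑ k : Fin n, ∑ l : Fin n, V' i j := by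
          simp [Finset.sum_const, Finset.card_univ, nsmul_eq_mul]; ring
        have h2 : ∀ k l, V' i j = V' i l + V' k j - V' k l := by
          intro k l; linarith [hcross i j k l]
        rw [h1, Finset.sum_congr rfl fun k _ => Finset.sum_congr rfl fun l _ => h2 k l]
        simp only [Finset.sum_sub_distrib, Finset.sum_add_distrib, Finset.sum_const,
          Finset.card_univ, Fintype.card_fin, nsmul_eq_mul]
        rw [← Finset.mul_sum]
        try ring
      rw [hrowV' i, hcolV' j, hVsum'] at key
      have hn2 : (n : ℝ) ^ 2 ≠ 0 := pow_ne_zero _ hn0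
      rw [hVij]
      have goal2 : (n : ℝ) ^ 2 * V' i j
          = (n : ℝ) ^ 2 * ((∑ l, M i l) / n + (∑ k, M k j) / n - 2 * T / n ^ 2) := by
        rw [key, hw']
        field_simp
        ring
      exact mul_left_cancel₀ hn2 goal2
    have hS'eq : S' = M - V := by
      rw [← hV'eq, hM]; ext i j; simp
    exact Prod.ext hS'eq hV'eq
end

section
/- If S ∈ S_n and V ∈ V_n, then both products SV and VS lie in V_n. -/
open Matrix Finset

/-- If `S ∈ S_n` and `V ∈ V_n`, then both `S * V` and `V * S` lie in `V_n`. -/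
theorem typeS_mul_typeV {n : ℕ} (S V : Matrix (Fin n) (Fin n) ℝ)
    (hS : IsTypeS S) (hV : IsTypeV V) : IsTypeV (S * V) ∧ IsTypeV (V * S) := by
  obtain ⟨w, hrow, hcol⟩ := hS
  obtain ⟨hVc, hVs⟩ := hV
  rcases Nat.eq_zero_or_pos n with hn | hn
  · subst hn
    exact ⟨⟨fun i => i.elim0, by simp⟩, ⟨fun i => i.elim0, by simp⟩⟩
  · set m0 : Fin n := ⟨0, hn⟩ with hm0
    have hcol' : ∀ (m j l : Fin n), V m j - V m l = V m0 j - V m0 l := fun m j l => by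
      have := hVc m j m0 l; linarith
    have hrow' : ∀ (i k m : Fin n), V i m - V k m = V i m0 - V k m0 := fun i k m => by
      have := hVc i m k m0; linarith
    constructor
    · constructor
      · intro i j k l
        simp only [Matrix.mul_apply]
        rw [← Finset.sum_add_distrib, ← Finset.sum_add_distrib, ← sub_eq_zero,
          ← Finset.sum_sub_distrib]
        have : ∀ m ∈ Finset.univ, (S i m * V m j + S k m * V m l) -
            (S i m * V m l + S k m * V m j) = (S i m - S k m) * (V m0 j - V m0 l) := by
          intro m _
          linear_combination (S i m - S k m) * (hcol' m j l)
        rw [Finset.sum_congr rfl this, ← Finset.sum_mul, Finset.sum_sub_distrib,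
          hrow i, hrow k, sub_self, zero_mul]
      · have h1 : ∀ i : Fin n, ∑ j, ∑ m, S i m * V m j = ∑ m, S i m * ∑ j, V m j := by
          intro i
          rw [Finset.sum_comm]
          exact Finset.sum_congr rfl fun m _ => (Finset.mul_sum _ _ _).symm
        have : ∑ i, ∑ j, (S * V) i j = (n * w) * ∑ m, ∑ j, V m j := by
          simp only [Matrix.mul_apply]
          rw [Finset.sum_congr rfl fun i _ => h1 i, Finset.sum_comm, Finset.mul_sum]
          refine Finset.sum_congr rfl fun m _ => ?_
          rw [← Finset.sum_mul, hcol m]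
        rw [this, hVs, mul_zero]
    · constructor
      · intro i j k l
        simp only [Matrix.mul_apply]
        rw [← Finset.sum_add_distrib, ← Finset.sum_add_distrib, ← sub_eq_zero,
          ← Finset.sum_sub_distrib]
        have : ∀ m ∈ Finset.univ, (V i m * S m j + V k m * S m l) -
            (V i m * S m l + V k m * S m j) = (V i m0 - V k m0) * (S m j - S m l) := by
          intro m _
          linear_combination (S m j - S m l) * (hrow' i k m)
        rw [Finset.sum_congr rfl this, ← Finset.mul_sum, Finset.sum_sub_distrib,
          hcol j, hcol l, sub_self, mul_zero]
      · have h1 : ∀ i : Fin n, ∑ j, ∑ m, V i m * S m j = ∑ m, V i m * ∑ j, S m j := by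
          intro i
          rw [Finset.sum_comm]
          exact Finset.sum_congr rfl fun m _ => (Finset.mul_sum _ _ _).symm
        have : ∑ i, ∑ j, (V * S) i j = (∑ i, ∑ m, V i m) * (n * w) := by
          simp only [Matrix.mul_apply]
          rw [Finset.sum_congr rfl fun i _ => h1 i, Finset.sum_mul]
          refine Finset.sum_congr rfl fun i _ => ?_
          rw [Finset.sum_mul]
          exact Finset.sum_congr rfl fun m _ => by rw [hrow m]
        rw [this, hVs, zero_mul]
end

section
/- If A, B ∈ V_n, then the product AB lies in S_n. -/
open Matrix Finset

/-- If `A, B ∈ V_n`, then `A * B ∈ S_n`. -/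
theorem typeV_mul_typeV {n : ℕ} (A B : Matrix (Fin n) (Fin n) ℝ)
    (hA : IsTypeV A) (hB : IsTypeV B) : IsTypeS (A * B) := by
  rcases n with _ | m
  · exact ⟨0, fun i => i.elim0, fun j => j.elim0⟩
  have hn : ((m + 1 : ℕ) : ℝ) ≠ 0 := by positivity
  -- row sums of A*B
  have hrow : ∀ i, ∑ j, (A * B) i j = ∑ k, A i k * (∑ j, B k j) := by
    intro i
    simp only [mul_apply]
    rw [Finset.sum_comm]
    simp [Finset.mul_sum]
  have hcol : ∀ j, ∑ i, (A * B) i j = ∑ k, (∑ i, A i k) * B k j := by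
    intro j
    simp only [mul_apply]
    rw [Finset.sum_comm]
    simp [Finset.sum_mul]
  -- all row sums are equal
  have hrowconst : ∀ i, ∑ j, (A * B) i j = ∑ j, (A * B) 0 j := by
    intro i
    rw [hrow i, hrow 0]
    have h1 : ∀ k, A i k = A 0 k + (A i 0 - A 0 0) := by
      intro k
      have := hA.1 i k 0 0
      linarith
    calc ∑ k, A i k * (∑ j, B k j)
        = ∑ k, (A 0 k * (∑ j, B k j) + (A i 0 - A 0 0) * (∑ j, B k j)) := by
          refine Finset.sum_congr rfl fun k _ => ?_
          rw [h1 k]; ring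
      _ = (∑ k, A 0 k * (∑ j, B k j)) + (A i 0 - A 0 0) * ∑ k, ∑ j, B k j := by
          rw [Finset.sum_add_distrib, Finset.mul_sum]
      _ = ∑ k, A 0 k * (∑ j, B k j) := by rw [hB.2]; ring
  -- all column sums are equal
  have hcolconst : ∀ j, ∑ i, (A * B) i j = ∑ i, (A * B) i 0 := by
    intro j
    rw [hcol j, hcol 0]
    have h1 : ∀ k, B k j = B k 0 + (B 0 j - B 0 0) := by
      intro k
      have := hB.1 k j 0 0
      linarith
    have hAsum : ∑ k, ∑ i, A i k = 0 := by rw [Finset.sum_comm]; exact hA.2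
    calc ∑ k, (∑ i, A i k) * B k j
        = ∑ k, ((∑ i, A i k) * B k 0 + (∑ i, A i k) * (B 0 j - B 0 0)) := by
          refine Finset.sum_congr rfl fun k _ => ?_
          rw [h1 k]; ring
      _ = (∑ k, (∑ i, A i k) * B k 0) + (∑ k, ∑ i, A i k) * (B 0 j - B 0 0) := by
          rw [Finset.sum_add_distrib, Finset.sum_mul]
      _ = ∑ k, (∑ i, A i k) * B k 0 := by rw [hAsum]; ring
  -- row constant equals column constant via total sum
  have htot1 : ∑ i, ∑ j, (A * B) i j = (m + 1 : ℕ) * ∑ j, (A * B) 0 j := by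
    rw [Finset.sum_congr rfl fun i _ => hrowconst i]
    simp [Finset.sum_const, Finset.card_univ]
  have htot2 : ∑ i, ∑ j, (A * B) i j = (m + 1 : ℕ) * ∑ i, (A * B) i 0 := by
    rw [show ∑ i, ∑ j, (A * B) i j = ∑ j, ∑ i, (A * B) i j from Finset.sum_comm,
      Finset.sum_congr rfl fun j _ => hcolconst j]
    simp [Finset.sum_const, Finset.card_univ]
  have heq : ∑ j, (A * B) 0 j = ∑ i, (A * B) i 0 :=
    mul_left_cancel₀ hn (htot1.symm.trans htot2)
  refine ⟨(∑ j, (A * B) 0 j) / (m + 1 : ℕ), fun i => ?_, fun j => ?_⟩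
  · rw [hrowconst i]; field_simp
  · rw [hcolconst j, ← heq]; field_simp
end

section
/- An n×n real matrix M is an element of V_n if and only if there exist vectors a, b ∈ ℝ^n, each orthogonal to the all-ones vector 1_n, such that M = a·1_n^T + 1_n·b^T. -/
open Matrix Finset

/-- `M ∈ V_n` if and only if `M = a 1ₙᵀ + 1ₙ bᵀ` for some vectors `a, b` orthogonal to
the all-ones vector. -/
theorem typeV_iff_rank_one_sum {n : ℕ} (M : Matrix (Fin n) (Fin n) ℝ) :
    IsTypeV M ↔ ∃ a b : Fin n → ℝ, (∑ i, a i = 0) ∧ (∑ i, b i = 0) ∧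
      M = vecMulVec a (fun _ => 1) + vecMulVec (fun _ => 1) b := by
  constructor
  · rintro ⟨hcross, hsum⟩
    rcases Nat.eq_zero_or_pos n with hn | hn
    · subst hn
      refine ⟨0, 0, by simp, by simp, ?_⟩
      ext i j
      exact i.elim0
    have hn' : (n : ℝ) ≠ 0 := Nat.cast_ne_zero.mpr hn.ne'
    refine ⟨fun i => (∑ l, M i l) / n, fun j => (∑ k, M k j) / n, ?_, ?_, ?_⟩
    · rw [← Finset.sum_div, hsum, zero_div]
    · rw [← Finset.sum_div, Finset.sum_comm, hsum, zero_div]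
    · ext i j
      simp only [Matrix.add_apply, vecMulVec_apply, mul_one, one_mul]
      have key : (∑ l, M i l) * n + (∑ k, M k j) * n = M i j * (n * n) := by
        have : ∑ k, ∑ l, (M i l + M k j) = ∑ k, ∑ l, (M i j + M k l) := by
          refine Finset.sum_congr rfl fun k _ => Finset.sum_congr rfl fun l _ => ?_
          linarith [hcross i j k l]
        simp only [Finset.sum_add_distrib, Finset.sum_const, Finset.card_univ,
          Fintype.card_fin, nsmul_eq_mul] at this
        rw [hsum, ← Finset.mul_sum] at this
        linarith [this]
      field_simp
      have h3 : (∑ l, M i l + ∑ k, M k j) * n = (M i j * ↑n) * n := by nlinarith [key]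
      exact mul_right_cancel₀ hn' h3.symm
  · rintro ⟨a, b, ha, hb, rfl⟩
    constructor
    · intro i j k l
      simp only [Matrix.add_apply, vecMulVec_apply, mul_one, one_mul]
      ring
    · simp only [Matrix.add_apply, vecMulVec_apply, mul_one, one_mul,
        Finset.sum_add_distrib, Finset.sum_const, Finset.card_univ,
        Fintype.card_fin, nsmul_eq_mul, ha, hb]
      rw [← Finset.mul_sum, ha, mul_zero]; ring
end

section
/- For n ≥ 1, the subspace V_n of n×n real matrices has dimension 2n − 2, and consequently the subspace S_n has dimension n² − 2n + 2. -/
open Matrix Finset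

/-- The subspace `S_n` of type S matrices. -/
def Ssub (n : ℕ) : Submodule ℝ (Matrix (Fin n) (Fin n) ℝ) where
  carrier := {M | IsTypeS M}
  add_mem' := by
    rintro A B ⟨wa, ha1, ha2⟩ ⟨wb, hb1, hb2⟩
    exact ⟨wa + wb,
      fun i => by simp only [Matrix.add_apply, Finset.sum_add_distrib, ha1 i, hb1 i]; ring,
      fun j => by simp only [Matrix.add_apply, Finset.sum_add_distrib, ha2 j, hb2 j]; ring⟩
  zero_mem' := ⟨0, by simp, by simp⟩
  smul_mem' := by
    rintro c A ⟨w, h1, h2⟩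
    exact ⟨c * w,
      fun i => by
        simp only [Matrix.smul_apply, smul_eq_mul, ← Finset.mul_sum, h1 i]; ring,
      fun j => by
        simp only [Matrix.smul_apply, smul_eq_mul, ← Finset.mul_sum, h2 j]; ring⟩

/-- The subspace `V_n` of type V matrices. -/
def Vsub (n : ℕ) : Submodule ℝ (Matrix (Fin n) (Fin n) ℝ) where
  carrier := {M | IsTypeV M}
  add_mem' := by
    rintro A B ⟨hA1, hA2⟩ ⟨hB1, hB2⟩
    refine ⟨fun i j k l => ?_, ?_⟩
    · have h := hA1 i j k l
      have h' := hB1 i j k l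
      simp only [Matrix.add_apply]
      linarith
    · simp only [Matrix.add_apply, Finset.sum_add_distrib, hA2, hB2, add_zero]
  zero_mem' := ⟨fun i j k l => by simp, by simp⟩
  smul_mem' := by
    rintro c A ⟨h1, h2⟩
    refine ⟨fun i j k l => ?_, ?_⟩
    · simp only [Matrix.smul_apply, smul_eq_mul]
      rw [← mul_add, ← mul_add, h1 i j k l]
    · simp only [Matrix.smul_apply, smul_eq_mul, ← Finset.mul_sum, h2, mul_zero]


open Module

def Lmap (n : ℕ) : ((Fin n → ℝ) × (Fin n → ℝ)) →ₗ[ℝ] Matrix (Fin n) (Fin n) ℝ where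
  toFun p := Matrix.of fun i j => p.1 i + p.2 j
  map_add' p q := by ext i j; simp [Matrix.add_apply]; ring
  map_smul' c p := by ext i j; simp [Matrix.smul_apply]; ring

def gmap (n : ℕ) : ((Fin n → ℝ) × (Fin n → ℝ)) →ₗ[ℝ] ℝ where
  toFun p := (∑ i, p.1 i) + ∑ j, p.2 j
  map_add' p q := by simp [Finset.sum_add_distrib]; ring
  map_smul' c p := by simp [smul_eq_mul, mul_add, Finset.mul_sum]

lemma Vsub_eq (n : ℕ) (hn : 0 < n) :
    Vsub n = Submodule.map (Lmap n) (LinearMap.ker (gmap n)) := by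
  ext M
  constructor
  · rintro ⟨h1, h2⟩
    set i0 : Fin n := ⟨0, hn⟩ with hi0
    have hrep : ∀ i j, M i j = M i i0 + (M i0 j - M i0 i0) := by
      intro i j; have := h1 i i0 i0 j; linarith
    have hLM : Lmap n (fun i => M i i0, fun j => M i0 j - M i0 i0) = M := by
      ext i j
      show M i i0 + (M i0 j - M i0 i0) = M i j
      exact (hrep i j).symm
    refine ⟨(fun i => M i i0, fun j => M i0 j - M i0 i0), ?_, hLM⟩
    have h3 : ∑ i, ∑ j, M i j
        = (n : ℝ) * ((∑ i, M i i0) + ∑ j, (M i0 j - M i0 i0)) := by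
      rw [show ∑ i, ∑ j, M i j = ∑ i, ∑ j, (M i i0 + (M i0 j - M i0 i0)) from
        Finset.sum_congr rfl fun i _ => Finset.sum_congr rfl fun j _ => hrep i j]
      simp [Finset.sum_add_distrib, Finset.sum_sub_distrib, Finset.sum_const,
        Finset.card_univ, nsmul_eq_mul]
      rw [mul_add, Finset.mul_sum]
      simp only [Finset.mul_sum, mul_sub]
    show (∑ i, M i i0) + ∑ j, (M i0 j - M i0 i0) = (0 : ℝ)
    have hn' : (n : ℝ) ≠ 0 := Nat.cast_ne_zero.mpr hn.ne'
    have h4 : (n : ℝ) * ((∑ i, M i i0) + ∑ j, (M i0 j - M i0 i0)) = 0 := by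
      rw [← h3]; exact h2
    exact (mul_eq_zero.mp h4).resolve_left hn'
  · rintro ⟨p, hp, rfl⟩
    have hp' : (∑ i, p.1 i) + ∑ j, p.2 j = 0 := hp
    refine ⟨fun i j k l => ?_, ?_⟩
    · show (p.1 i + p.2 j) + (p.1 k + p.2 l) = (p.1 i + p.2 l) + (p.1 k + p.2 j)
      ring
    · show ∑ i, ∑ j, (p.1 i + p.2 j) = 0
      have hch : ∑ i, ∑ j, (p.1 i + p.2 j)
          = (n : ℝ) * ((∑ i, p.1 i) + ∑ j, p.2 j) := by
        simp [Finset.sum_add_distrib, Finset.sum_const, Finset.card_univ, nsmul_eq_mul]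
        rw [mul_add, Finset.mul_sum, Finset.mul_sum]
      rw [hch, hp', mul_zero]

lemma finrank_ker_gmap (n : ℕ) (hn : 0 < n) :
    finrank ℝ (LinearMap.ker (gmap n)) + 1 = 2 * n := by
  set i0 : Fin n := ⟨0, hn⟩
  have hsurj : LinearMap.range (gmap n) = ⊤ := by
    rw [LinearMap.range_eq_top]
    intro r
    refine ⟨((fun _ => 0 : Fin n → ℝ), Pi.single i0 r), ?_⟩
    show (∑ i : Fin n, (0:ℝ)) + ∑ j, Pi.single i0 r j = r
    simp [Finset.sum_pi_single']
  have h1 := LinearMap.finrank_range_add_finrank_ker (gmap n)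
  rw [hsurj, finrank_top, Module.finrank_self] at h1
  rw [finrank_prod, Module.finrank_fin_fun] at h1
  omega

lemma finrank_Vsub (n : ℕ) (hn : 0 < n) :
    finrank ℝ (Vsub n) + 2 = 2 * n := by
  set i0 : Fin n := ⟨0, hn⟩
  set f := (Lmap n).domRestrict (LinearMap.ker (gmap n)) with hf
  have hrange : LinearMap.range f = Submodule.map (Lmap n) (LinearMap.ker (gmap n)) :=
    LinearMap.range_domRestrict _ _
  have hrfr : finrank ℝ (LinearMap.range f) = finrank ℝ (Vsub n) := by
    rw [hrange, ← Vsub_eq n hn]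
  -- kernel of f is the span of v
  have hv0mem : ((fun _ => (1:ℝ)), (fun _ => (-1:ℝ))) ∈ LinearMap.ker (gmap n) := by
    show (∑ _i : Fin n, (1:ℝ)) + ∑ _j : Fin n, (-1:ℝ) = 0
    simp
  set v : LinearMap.ker (gmap n) :=
    ⟨((fun _ => (1:ℝ)), (fun _ => (-1:ℝ))), hv0mem⟩ with hv
  have hker : LinearMap.ker f = Submodule.span ℝ {v} := by
    ext x
    constructor
    · intro hx
      have hx' : Lmap n (x : (Fin n → ℝ) × (Fin n → ℝ)) = 0 := hx
      have hent : ∀ i j : Fin n, (x : (Fin n → ℝ) × (Fin n → ℝ)).1 i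
          + (x : (Fin n → ℝ) × (Fin n → ℝ)).2 j = 0 := by
        intro i j
        have := congrFun (congrFun (congrArg (fun M => (M : Matrix (Fin n) (Fin n) ℝ)) hx') i) j
        exact this
      rw [Submodule.mem_span_singleton]
      refine ⟨(x : (Fin n → ℝ) × (Fin n → ℝ)).1 i0, ?_⟩
      apply Subtype.ext
      have e1 : ∀ i : Fin n, (x : (Fin n → ℝ) × (Fin n → ℝ)).1 i
          = (x : (Fin n → ℝ) × (Fin n → ℝ)).1 i0 := by
        intro i
        have a := hent i i0; have b := hent i0 i0; linarith
      have e2 : ∀ j : Fin n, (x : (Fin n → ℝ) × (Fin n → ℝ)).2 j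
          = -(x : (Fin n → ℝ) × (Fin n → ℝ)).1 i0 := by
        intro j; have := hent i0 j; linarith
      show ((x : (Fin n → ℝ) × (Fin n → ℝ)).1 i0)
          • ((fun _ => (1:ℝ)), (fun _ => (-1:ℝ)))
          = (x : (Fin n → ℝ) × (Fin n → ℝ))
      ext k
      · show (x : (Fin n → ℝ) × (Fin n → ℝ)).1 i0 * 1 = _
        rw [mul_one]; exact (e1 k).symm
      · show (x : (Fin n → ℝ) × (Fin n → ℝ)).1 i0 * (-1) = _
        rw [mul_neg_one]; exact (e2 k).symm
    · intro hx
      refine Submodule.span_le.mpr ?_ hx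
      intro y hy
      rcases Set.mem_singleton_iff.mp hy with rfl
      show Lmap n (v : (Fin n → ℝ) × (Fin n → ℝ)) = 0
      ext i j
      show (1 : ℝ) + (-1) = 0
      ring
  have hvne : v ≠ 0 := by
    intro h
    have : ((fun _ => (1:ℝ)) : Fin n → ℝ) = 0 := congrArg (fun z => (z : (Fin n → ℝ) × (Fin n → ℝ)).1) (Subtype.ext_iff.mp h)
    exact one_ne_zero (congrFun this i0)
  have hkfr : finrank ℝ (LinearMap.ker f) = 1 := by
    rw [hker]; exact finrank_span_singleton hvne
  have h1 := LinearMap.finrank_range_add_finrank_ker f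
  rw [hrfr, hkfr] at h1
  have h2 := finrank_ker_gmap n hn
  omega

lemma inf_eq_bot (n : ℕ) (hn : 0 < n) : Ssub n ⊓ Vsub n = ⊥ := by
  rw [eq_bot_iff]
  rintro M ⟨⟨w, hr, hc⟩, h1, h2⟩
  rw [Submodule.mem_bot]
  set i0 : Fin n := ⟨0, hn⟩
  have hn' : (n : ℝ) ≠ 0 := Nat.cast_ne_zero.mpr hn.ne'
  have hrep : ∀ i j, M i j = M i i0 + M i0 j - M i0 i0 := by
    intro i j; have := h1 i i0 i0 j; linarith
  have hsum : ∀ i : Fin n, ∑ j, M i j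
      = (n : ℝ) * M i i0 + (∑ j, M i0 j) - (n : ℝ) * M i0 i0 := by
    intro i
    rw [show ∑ j, M i j = ∑ j, (M i i0 + M i0 j - M i0 i0) from
      Finset.sum_congr rfl fun j _ => hrep i j]
    simp [Finset.sum_add_distrib, Finset.sum_sub_distrib, Finset.sum_const,
      Finset.card_univ, nsmul_eq_mul]
  have hrow0 : ∀ i : Fin n, M i i0 = M i0 i0 := by
    intro i
    have e1 := hsum i
    rw [hr i, hr i0] at e1
    have : (n : ℝ) * M i i0 = (n : ℝ) * M i0 i0 := by linarith
    exact mul_left_cancel₀ hn' this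
  have hsumc : ∀ j : Fin n, ∑ i, M i j
      = (n : ℝ) * M i0 j + (∑ i, M i i0) - (n : ℝ) * M i0 i0 := by
    intro j
    rw [show ∑ i, M i j = ∑ i, (M i i0 + M i0 j - M i0 i0) from
      Finset.sum_congr rfl fun i _ => hrep i j]
    simp [Finset.sum_add_distrib, Finset.sum_sub_distrib, Finset.sum_const,
      Finset.card_univ, nsmul_eq_mul]
    ring
  have hcol0 : ∀ j : Fin n, M i0 j = M i0 i0 := by
    intro j
    have e1 := hsumc j
    rw [hc j, hc i0] at e1
    have : (n : ℝ) * M i0 j = (n : ℝ) * M i0 i0 := by linarith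
    exact mul_left_cancel₀ hn' this
  have hall : ∀ i j, M i j = M i0 i0 := by
    intro i j; rw [hrep i j, hrow0 i, hcol0 j]; ring
  have htot : ∑ i, ∑ j, M i j = (n : ℝ) * ((n : ℝ) * M i0 i0) := by
    rw [show ∑ i, ∑ j, M i j = ∑ i : Fin n, ∑ j : Fin n, M i0 i0 from
      Finset.sum_congr rfl fun i _ => Finset.sum_congr rfl fun j _ => hall i j]
    simp [Finset.sum_const, Finset.card_univ, nsmul_eq_mul]
  rw [h2] at htot
  have hz : M i0 i0 = 0 := by
    have := (mul_eq_zero.mp htot.symm).resolve_left hn'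
    exact (mul_eq_zero.mp this).resolve_left hn'
  ext i j
  rw [hall i j, hz]
  rfl

lemma sup_eq_top (n : ℕ) (hn : 0 < n) : Ssub n ⊔ Vsub n = ⊤ := by
  rw [eq_top_iff]
  intro M _
  have hn' : (n : ℝ) ≠ 0 := Nat.cast_ne_zero.mpr hn.ne'
  set T : ℝ := ∑ i, ∑ j, M i j with hT
  set P : Matrix (Fin n) (Fin n) ℝ :=
    Matrix.of fun i j => (∑ l, M i l) / n + (∑ k, M k j) / n - 2 * T / n ^ 2 with hP
  have hcolT : ∑ j : Fin n, ∑ k, M k j = T := by rw [Finset.sum_comm, hT]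
  have hProw : ∀ i, ∑ j, P i j = (∑ l, M i l) + T / n - 2 * T / n := by
    intro i
    have : ∀ j : Fin n, P i j = (∑ l, M i l) / n + (∑ k, M k j) / n - 2 * T / n ^ 2 :=
      fun j => rfl
    rw [Finset.sum_congr rfl fun j _ => this j]
    rw [Finset.sum_sub_distrib, Finset.sum_add_distrib, Finset.sum_const,
      Finset.card_univ, Fintype.card_fin, ← Finset.sum_div, hcolT,
      Finset.sum_const, Finset.card_univ, Fintype.card_fin, nsmul_eq_mul, nsmul_eq_mul]
    field_simp
  have hPcol : ∀ j, ∑ i, P i j = (∑ k, M k j) + T / n - 2 * T / n := by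
    intro j
    have : ∀ i : Fin n, P i j = (∑ l, M i l) / n + (∑ k, M k j) / n - 2 * T / n ^ 2 :=
      fun i => rfl
    rw [Finset.sum_congr rfl fun i _ => this i]
    rw [Finset.sum_sub_distrib, Finset.sum_add_distrib, Finset.sum_const,
      Finset.card_univ, Fintype.card_fin, ← Finset.sum_div, hT,
      Finset.sum_const, Finset.card_univ, Fintype.card_fin, nsmul_eq_mul, nsmul_eq_mul]
    field_simp
    ring
  refine Submodule.mem_sup.mpr ⟨M - P, ?_, P, ?_, by abel⟩
  · refine ⟨T / n ^ 2, fun i => ?_, fun j => ?_⟩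
    · have : ∑ j, (M - P) i j = (∑ j, M i j) - ∑ j, P i j := by
        simp [Matrix.sub_apply, Finset.sum_sub_distrib]
      rw [this, hProw i]
      field_simp
      ring
    · have : ∑ i, (M - P) i j = (∑ i, M i j) - ∑ i, P i j := by
        simp [Matrix.sub_apply, Finset.sum_sub_distrib]
      rw [this, hPcol j]
      field_simp
      ring
  · refine ⟨fun i j k l => ?_, ?_⟩
    · show ((∑ x, M i x) / n + (∑ x, M x j) / n - 2 * T / n ^ 2)
          + ((∑ x, M k x) / n + (∑ x, M x l) / n - 2 * T / n ^ 2)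
          = ((∑ x, M i x) / n + (∑ x, M x l) / n - 2 * T / n ^ 2)
          + ((∑ x, M k x) / n + (∑ x, M x j) / n - 2 * T / n ^ 2)
      ring
    · show ∑ i, ∑ j, P i j = 0
      have hstep : ∑ i : Fin n, ((∑ l, M i l) + T / n - 2 * T / n)
          = T + (n : ℝ) * (T / n) - (n : ℝ) * (2 * T / n) := by
        rw [Finset.sum_sub_distrib, Finset.sum_add_distrib, Finset.sum_const,
          Finset.sum_const, Finset.card_univ, Fintype.card_fin, nsmul_eq_mul,
          nsmul_eq_mul, ← hT]
      rw [Finset.sum_congr rfl fun i _ => hProw i, hstep]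
      field_simp
      ring

/-- `dim V_n = 2n - 2` and `dim S_n = n² - 2n + 2`. -/
theorem dim_Vsub_and_Ssub (n : ℕ) (hn : 1 ≤ n) :
    (Module.finrank ℝ (Vsub n) : ℤ) = 2 * n - 2 ∧
    (Module.finrank ℝ (Ssub n) : ℤ) = n ^ 2 - 2 * n + 2 := by
  have hV : finrank ℝ (Vsub n) + 2 = 2 * n := finrank_Vsub n hn
  have hkey : finrank ℝ (Ssub n) + finrank ℝ (Vsub n) = n * n := by
    have h := Submodule.finrank_sup_add_finrank_inf_eq (Ssub n) (Vsub n)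
    rw [sup_eq_top n hn, inf_eq_bot n hn, finrank_top, finrank_bot, add_zero] at h
    rw [← h, Module.finrank_matrix, Module.finrank_self, Fintype.card_fin, mul_one]
  constructor
  · omega
  · have h2 : (n : ℤ) ^ 2 = (n : ℤ) * n := sq (n : ℤ)
    rw [h2]
    omega
end

section
/- The decomposition ℝ^{n×n} = S_n ⊕ V_n is orthogonal with respect to the Frobenius inner product: for every S ∈ S_n and V ∈ V_n, one has tr(S^T V) = 0. -/
open Matrix Finset

/-- The decomposition `ℝ^{n×n} = S_n ⊕ V_n` is orthogonal with respect to the Frobenius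
inner product: `tr(Sᵀ V) = 0` for `S ∈ S_n`, `V ∈ V_n`. -/
theorem frobenius_orthogonal {n : ℕ} (S V : Matrix (Fin n) (Fin n) ℝ)
    (hS : IsTypeS S) (hV : IsTypeV V) : (Sᵀ * V).trace = 0 := by
  obtain ⟨w, hrow, hcol⟩ := hS
  obtain ⟨hcross, hsum⟩ := hV
  rcases Nat.eq_zero_or_pos n with h0 | hn
  · subst h0
    simp [Matrix.trace]
  · set i0 : Fin n := ⟨0, hn⟩ with hi0
    have hV' : ∀ i j, V i j = V i i0 + V i0 j - V i0 i0 := fun i j => by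
      have := hcross i j i0 i0
      linarith
    set a := ∑ i, V i i0 with ha
    set b := ∑ j, V i0 j with hb
    set c := V i0 i0 with hc
    have hn' : (n : ℝ) ≠ 0 := Nat.cast_ne_zero.mpr hn.ne'
    have h1 : ∑ i, ∑ j, V i j = (n : ℝ) * (a + b - n * c) := by
      have hrowV : ∀ i : Fin n, ∑ j, V i j = n * V i i0 + b - n * c := by
        intro i
        rw [show (∑ j, V i j) = ∑ j, (V i i0 + V i0 j - V i0 i0) from
          Finset.sum_congr rfl fun j _ => hV' i j]
        rw [Finset.sum_sub_distrib, Finset.sum_add_distrib]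
        simp [hb, hc, mul_comm, Finset.sum_const, Finset.card_univ]
      rw [Finset.sum_congr rfl fun i _ => hrowV i]
      rw [Finset.sum_sub_distrib, Finset.sum_add_distrib, ← Finset.mul_sum, ← ha]
      simp [Finset.sum_const, Finset.card_univ]
      ring
    have key : a + b - n * c = 0 := by
      rw [h1] at hsum
      exact (mul_eq_zero.mp hsum).resolve_left hn'
    have htr : (Sᵀ * V).trace = ∑ i, ∑ j, S i j * V i j := by
      simp only [Matrix.trace, Matrix.mul_apply, Matrix.diag, Matrix.transpose_apply]
      exact Finset.sum_comm
    have step : ∀ i, ∑ j, S i j * V i j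
        = (n * w) * V i i0 + (∑ j, S i j * V i0 j) - (n * w) * c := by
      intro i
      have e : ∀ j : Fin n, S i j * V i j = S i j * V i i0 + S i j * V i0 j - S i j * c :=
        fun j => by rw [hV' i j, hc]; ring
      rw [Finset.sum_congr rfl fun j _ => e j, Finset.sum_sub_distrib,
        Finset.sum_add_distrib, ← Finset.sum_mul, ← Finset.sum_mul, hrow i]
    have h2 : ∑ i, ∑ j, S i j * V i0 j = (n * w) * b := by
      rw [Finset.sum_comm, hb, Finset.mul_sum]
      exact Finset.sum_congr rfl fun j _ => by rw [← Finset.sum_mul, hcol j]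
    rw [htr, Finset.sum_congr rfl fun i _ => step i, Finset.sum_sub_distrib,
      Finset.sum_add_distrib, ← Finset.mul_sum, ← ha, h2]
    simp [Finset.sum_const, Finset.card_univ]
    linear_combination ((n : ℝ) * w) * key
end

section
/- Let M, N be n×n real matrices with decompositions M = M_V + M_0 + (wt M)·E_n and N = N_V + N_0 + (wt N)·E_n, where N_V = a·1_n^T + 1_n·b^T with a, b orthogonal to 1_n. If M = N^T N, then: (1) wt M = |a|² + n·(wt N)²; (2) M_V = y·1_n^T + 1_n·y^T where y = N_0^T a + n·(wt N)·b; and (3) M_0 = N_0^T N_0 + n·b·b^T. -/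
open Matrix Finset

/-- The weight of a matrix: the mean of all its entries. -/
noncomputable def wt {n : ℕ} (M : Matrix (Fin n) (Fin n) ℝ) : ℝ :=
  (1 / (n : ℝ) ^ 2) * ∑ i, ∑ j, M i j

/-- The all-ones `n × n` matrix `E_n = 1ₙ 1ₙᵀ`. -/
def En (n : ℕ) : Matrix (Fin n) (Fin n) ℝ := Matrix.of fun _ _ => 1

/-- A type-S matrix of weight zero has all row and column sums zero. -/
lemma typeS_sums_zero {n : ℕ} (hn : 0 < n) {M : Matrix (Fin n) (Fin n) ℝ}
    (h : IsTypeS M) (hw : wt M = 0) :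
    (∀ i, ∑ j, M i j = 0) ∧ (∀ j, ∑ i, M i j = 0) := by
  obtain ⟨w, hr, hc⟩ := h
  have hnR : (n : ℝ) ≠ 0 := Nat.cast_ne_zero.mpr hn.ne'
  have hw0 : w = 0 := by
    have h2 : wt M = w := by
      simp only [wt, hr, Finset.sum_const, Finset.card_univ, Fintype.card_fin,
        nsmul_eq_mul]
      field_simp
    rw [hw] at h2; exact h2.symm
  subst hw0
  constructor
  · intro i; rw [hr i]; ring
  · intro j; rw [hc j]; ring

/-- If `M = Nᵀ N`, then in terms of the S+V decompositions of `M` and `N` (with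
`N_V = a 1ₙᵀ + 1ₙ bᵀ`):
(1) `wt M = |a|² + n (wt N)²`;
(2) `M_V = y 1ₙᵀ + 1ₙ yᵀ` with `y = N₀ᵀ a + n (wt N) b`;
(3) `M₀ = N₀ᵀ N₀ + n b bᵀ`. -/
theorem weights_of_transpose_factorisation {n : ℕ}
    (M N MV M0 N0 : Matrix (Fin n) (Fin n) ℝ) (a b : Fin n → ℝ)
    (ha : ∑ i, a i = 0) (hb : ∑ i, b i = 0)
    (hMV : IsTypeV MV) (hM0 : IsTypeS M0) (hM0w : wt M0 = 0)
    (hMdec : M = MV + M0 + wt M • En n)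
    (hN0 : IsTypeS N0) (hN0w : wt N0 = 0)
    (hNdec : N = vecMulVec a (fun _ => 1) + vecMulVec (fun _ => 1) b + N0 +
      wt N • En n)
    (hfact : M = Nᵀ * N) :
    wt M = (∑ i, a i ^ 2) + n * wt N ^ 2 ∧
    (MV = vecMulVec (N0ᵀ *ᵥ a + ((n : ℝ) * wt N) • b) (fun _ => 1) +
          vecMulVec (fun _ => 1) (N0ᵀ *ᵥ a + ((n : ℝ) * wt N) • b)) ∧
    M0 = N0ᵀ * N0 + (n : ℝ) • vecMulVec b b := by
  rcases Nat.eq_zero_or_pos n with hn | hn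
  · subst hn
    refine ⟨?_, ?_, ?_⟩
    · simp [wt]
    · ext i j; exact i.elim0
    · ext i j; exact i.elim0
  have hnR : (n : ℝ) ≠ 0 := Nat.cast_ne_zero.mpr hn.ne'
  obtain ⟨hN0row, hN0col⟩ := typeS_sums_zero hn hN0 hN0w
  obtain ⟨hM0row, hM0col⟩ := typeS_sums_zero hn hM0 hM0w
  -- abbreviations
  set w := wt N with hwdef
  set c' : ℝ := (∑ k, a k ^ 2) + n * w ^ 2 with hc'def
  set Y : Fin n → ℝ := fun i => (∑ k, N0 k i * a k) + n * w * b i with hYdef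
  set Q : Fin n → Fin n → ℝ :=
    fun i j => (∑ k, N0 k i * N0 k j) + n * (b i * b j) with hQdef
  -- entries of N
  have hNe : ∀ k i, N k i = a k + b i + N0 k i + w := by
    intro k i
    rw [hNdec]
    simp [Matrix.add_apply, Matrix.smul_apply, vecMulVec_apply, En]
  -- the key entrywise formula for M = Nᵀ N
  have key : ∀ i j, M i j = c' + Y i + Y j + Q i j := by
    intro i j
    rw [hfact, Matrix.mul_apply]
    simp only [Matrix.transpose_apply]
    have h1 : ∑ k, N k i * N k j
        = (∑ k, a k ^ 2) + (∑ k, N0 k i * a k) + (∑ k, N0 k j * a k)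
          + (∑ k, N0 k i * N0 k j)
          + (∑ k, a k) * (b i + b j + 2 * w)
          + (∑ k, N0 k i) * (b j + w) + (∑ k, N0 k j) * (b i + w)
          + (∑ (_k : Fin n), (b i * b j + w ^ 2 + w * b i + w * b j)) := by
      simp only [Finset.sum_mul, ← Finset.sum_add_distrib]
      refine Finset.sum_congr rfl fun k _ => ?_
      rw [hNe k i, hNe k j]
      ring
    rw [h1, ha, hN0col i, hN0col j]
    simp only [Finset.sum_const, Finset.card_univ, Fintype.card_fin, nsmul_eq_mul,
      hc'def, hYdef, hQdef]
    ring
  -- sums of Y and of rows/columns of Q vanish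
  have hYsum : ∑ i, Y i = 0 := by
    simp only [hYdef, Finset.sum_add_distrib]
    rw [Finset.sum_comm]
    have h1 : ∀ k : Fin n, ∑ i, N0 k i * a k = 0 := by
      intro k; rw [← Finset.sum_mul, hN0row k, zero_mul]
    have h2 : ∑ i, (n : ℝ) * w * b i = 0 := by
      rw [← Finset.mul_sum, hb, mul_zero]
    rw [Finset.sum_congr rfl fun k _ => h1 k, h2]
    simp
  have hQrow : ∀ i, ∑ j, Q i j = 0 := by
    intro i
    simp only [hQdef, Finset.sum_add_distrib]
    have h1 : ∑ j, ∑ k, N0 k i * N0 k j = 0 := by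
      rw [Finset.sum_comm]
      refine Finset.sum_eq_zero fun k _ => ?_
      rw [← Finset.mul_sum, hN0row k, mul_zero]
    have h2 : ∑ j, (n : ℝ) * (b i * b j) = 0 := by
      simp only [← Finset.mul_sum, hb, mul_zero]
    rw [h1, h2, add_zero]
  have hQcol : ∀ j, ∑ i, Q i j = 0 := by
    intro j
    simp only [hQdef, Finset.sum_add_distrib]
    have h1 : ∑ i, ∑ k, N0 k i * N0 k j = 0 := by
      rw [Finset.sum_comm]
      refine Finset.sum_eq_zero fun k _ => ?_
      rw [← Finset.sum_mul, hN0row k, zero_mul]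
    have h2 : ∑ i, (n : ℝ) * (b i * b j) = 0 := by
      rw [← Finset.mul_sum, ← Finset.sum_mul, hb, zero_mul, mul_zero]
    rw [h1, h2, add_zero]
  -- total sum of M
  have hMsum : ∑ i, ∑ j, M i j = (n : ℝ) ^ 2 * c' := by
    have h1 : ∀ i, ∑ j, M i j = (n : ℝ) * c' + (n : ℝ) * Y i := by
      intro i
      simp only [key, Finset.sum_add_distrib, Finset.sum_const, Finset.card_univ,
        Fintype.card_fin, nsmul_eq_mul, hYsum, hQrow i]
      ring
    simp only [h1, Finset.sum_add_distrib, Finset.sum_const, Finset.card_univ,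
      Fintype.card_fin, nsmul_eq_mul, ← Finset.mul_sum, hYsum]
    ring
  have hwtM : wt M = c' := by
    rw [wt, hMsum]
    field_simp
  have hyentry : ∀ i, (N0ᵀ *ᵥ a + ((n : ℝ) * w) • b) i = Y i := by
    intro i
    simp only [Pi.add_apply, Pi.smul_apply, smul_eq_mul, Matrix.mulVec,
      dotProduct, Matrix.transpose_apply, hYdef]
  have hMain : ∀ i j, MV i j + M0 i j = Y i + Y j + Q i j := by
    intro i j
    have h2 := congrFun (congrFun hMdec i) j
    simp only [Matrix.add_apply, Matrix.smul_apply, En, Matrix.of_apply,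
      smul_eq_mul, mul_one] at h2
    have h3 := key i j
    rw [hwtM] at h2
    linarith
  have hD : ∀ i j, MV i j - Y i - Y j = Q i j - M0 i j := by
    intro i j; have := hMain i j; linarith
  have hDrow : ∀ i, ∑ j, (Q i j - M0 i j) = 0 := by
    intro i; rw [Finset.sum_sub_distrib, hQrow i, hM0row i, sub_zero]
  have hDcol : ∀ j, ∑ i, (Q i j - M0 i j) = 0 := by
    intro j; rw [Finset.sum_sub_distrib, hQcol j, hM0col j, sub_zero]
  have hDcross : ∀ i j k l,
      (Q i j - M0 i j) + (Q k l - M0 k l) = (Q i l - M0 i l) + (Q k j - M0 k j) := by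
    intro i j k l
    rw [← hD, ← hD, ← hD, ← hD]
    have := hMV.1 i j k l
    linarith
  have hDzero : ∀ i j, Q i j - M0 i j = 0 := by
    intro i j
    have h4 : ∑ k, ∑ l, ((Q i j - M0 i j) + (Q k l - M0 k l))
        = ∑ k, ∑ l, ((Q i l - M0 i l) + (Q k j - M0 k j)) :=
      Finset.sum_congr rfl fun k _ => Finset.sum_congr rfl fun l _ => hDcross i j k l
    have h5 : ∑ k, ∑ l, ((Q i j - M0 i j) + (Q k l - M0 k l))
        = (n : ℝ) ^ 2 * (Q i j - M0 i j) := by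
      have h5a : ∀ k : Fin n, ∑ l, ((Q i j - M0 i j) + (Q k l - M0 k l))
          = (n : ℝ) * (Q i j - M0 i j) := by
        intro k
        rw [Finset.sum_add_distrib, hDrow k, Finset.sum_const, Finset.card_univ,
          Fintype.card_fin, nsmul_eq_mul, add_zero]
      rw [Finset.sum_congr rfl fun k _ => h5a k, Finset.sum_const, Finset.card_univ,
        Fintype.card_fin, nsmul_eq_mul]
      ring
    have h6 : ∑ k, ∑ l, ((Q i l - M0 i l) + (Q k j - M0 k j)) = 0 := by
      have h6a : ∀ k : Fin n, ∑ l, ((Q i l - M0 i l) + (Q k j - M0 k j))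
          = (n : ℝ) * (Q k j - M0 k j) := by
        intro k
        rw [Finset.sum_add_distrib, hDrow i, zero_add, Finset.sum_const,
          Finset.card_univ, Fintype.card_fin, nsmul_eq_mul]
      rw [Finset.sum_congr rfl fun k _ => h6a k, ← Finset.mul_sum, hDcol j, mul_zero]
    rw [h5, h6] at h4
    have hn2 : ((n : ℝ) ^ 2) ≠ 0 := pow_ne_zero _ hnR
    exact (mul_eq_zero.mp h4).resolve_left hn2
  refine ⟨hwtM, ?_, ?_⟩
  · ext i j
    have h7 := hD i j
    have h8 := hDzero i j
    simp only [Matrix.add_apply, vecMulVec_apply, hyentry, mul_one, one_mul]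
    linarith
  · ext i j
    have h8 := hDzero i j
    simp only [Matrix.add_apply, Matrix.smul_apply, Matrix.mul_apply,
      Matrix.transpose_apply, vecMulVec_apply, smul_eq_mul, hQdef] at h8 ⊢
    linarith
end

section
/- Let M be an n×n integer matrix and suppose M = N^T N for some n×n integer matrix N. Let N = a·1_n^T + 1_n·b^T + N_0 + (wt N)·E_n be the unique decomposition of N with a, b orthogonal to 1_n and N_0 ∈ S_n of weight 0. Then n²·(wt N) is an integer, each n²·a_j is an integer, and these integers satisfy the quadratic equation n⁴·(wt M) = n·(n²·wt N)² + Σ_{j=1}^n (n²·a_j)². -/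
open Matrix Finset

/-- Quadratic form obstruction for `M = Nᵀ N` with integer matrices: `n² wt N` and the
`n² aⱼ` are integers satisfying `n⁴ wt M = n (n² wt N)² + ∑ⱼ (n² aⱼ)²`. -/
theorem quadratic_obstruction_transpose {n : ℕ}
    (M N : Matrix (Fin n) (Fin n) ℤ) (hfact : M = Nᵀ * N)
    (a b : Fin n → ℝ) (N0 : Matrix (Fin n) (Fin n) ℝ)
    (ha : ∑ i, a i = 0) (hb : ∑ i, b i = 0)
    (hN0 : IsTypeS N0) (hN0w : wt N0 = 0)
    (hdec : N.map (Int.cast : ℤ → ℝ) =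
      vecMulVec a (fun _ => 1) + vecMulVec (fun _ => 1) b + N0 +
        wt (N.map (Int.cast : ℤ → ℝ)) • En n) :
    (∃ z : ℤ, (n : ℝ) ^ 2 * wt (N.map (Int.cast : ℤ → ℝ)) = z) ∧
    (∀ j, ∃ z : ℤ, (n : ℝ) ^ 2 * a j = z) ∧
    (n : ℝ) ^ 4 * wt (M.map (Int.cast : ℤ → ℝ)) =
      n * ((n : ℝ) ^ 2 * wt (N.map (Int.cast : ℤ → ℝ))) ^ 2 +
        ∑ j, ((n : ℝ) ^ 2 * a j) ^ 2 := by
  rcases Nat.eq_zero_or_pos n with hn | hn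
  · subst hn
    exact ⟨⟨0, by simp [wt]⟩, fun j => j.elim0, by simp [wt]⟩
  have hn' : (n : ℝ) ≠ 0 := Nat.cast_ne_zero.mpr hn.ne'
  set w := wt (N.map (Int.cast : ℤ → ℝ)) with hw
  -- entrywise decomposition
  have hentry : ∀ i j, (N i j : ℝ) = a i + b j + N0 i j + w := by
    intro i j
    have h := congrFun (congrFun hdec i) j
    simpa [vecMulVec, En, Matrix.map_apply, Matrix.add_apply, Matrix.smul_apply,
      smul_eq_mul] using h
  obtain ⟨w0, hrow, _⟩ := hN0
  have hw0 : w0 = 0 := by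
    have h1 : (1 / (n : ℝ) ^ 2) * ∑ i, ∑ j, N0 i j = 0 := hN0w
    have h2 : ∑ i, ∑ j, N0 i j = (n : ℝ) * ((n : ℝ) * w0) := by
      simp [hrow, Finset.sum_const, Finset.card_fin]
    rw [h2] at h1
    field_simp at h1
    simpa [mul_eq_zero, hn'] using h1
  have hrowN : ∀ i, ∑ j, (N i j : ℝ) = n * a i + n * w := by
    intro i
    simp only [hentry]
    rw [Finset.sum_add_distrib, Finset.sum_add_distrib, Finset.sum_add_distrib]
    simp [hb, hrow i, hw0, Finset.sum_const, Finset.card_fin]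
  -- n^2 w is an integer
  have hS : (n : ℝ) ^ 2 * w = ∑ i, ∑ j, (N i j : ℝ) := by
    rw [hw, wt]
    field_simp [Matrix.map_apply]
    rfl
  have hw_int : (n : ℝ) ^ 2 * w = ((∑ i, ∑ j, N i j : ℤ) : ℝ) := by
    rw [hS]; push_cast; ring
  refine ⟨⟨∑ i, ∑ j, N i j, hw_int⟩, ?_, ?_⟩
  · intro j
    refine ⟨(n : ℤ) * (∑ k, N j k) - ∑ i, ∑ k, N i k, ?_⟩
    have h := hrowN j
    push_cast
    rw [h, ← hS]
    ring
  · -- quadratic identity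
    have hSM : ∑ i, ∑ j, (M i j : ℝ) = ∑ k, (∑ i, (N k i : ℝ)) * (∑ j, (N k j : ℝ)) := by
      subst hfact
      simp only [Matrix.mul_apply, Matrix.transpose_apply]
      push_cast
      have key : ∀ f : Fin n → Fin n → Fin n → ℝ,
          ∑ i, ∑ j, ∑ k, f i j k = ∑ k, ∑ i, ∑ j, f i j k := by
        intro f
        calc ∑ i, ∑ j, ∑ k, f i j k = ∑ i, ∑ k, ∑ j, f i j k :=
              Finset.sum_congr rfl fun i _ => Finset.sum_comm
          _ = ∑ k, ∑ i, ∑ j, f i j k := Finset.sum_comm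
      rw [key fun i j k => (N k i : ℝ) * (N k j : ℝ)]
      exact Finset.sum_congr rfl fun k _ => (Finset.sum_mul_sum _ _ _ _).symm
    have hLHS : (n : ℝ) ^ 4 * wt (M.map (Int.cast : ℤ → ℝ)) =
        (n : ℝ) ^ 2 * ∑ i, ∑ j, (M i j : ℝ) := by
      rw [wt]
      field_simp [Matrix.map_apply]
      simp only [Matrix.map_apply]
    rw [hLHS, hSM]
    have : ∀ k, (∑ i, (N k i : ℝ)) * (∑ j, (N k j : ℝ)) = (n * a k + n * w) ^ 2 := by
      intro k; rw [hrowN k]; ring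
    simp only [this]
    have hexp : ∀ k, (n : ℝ) ^ 2 * ((n : ℝ) * a k + n * w) ^ 2 =
        ((n : ℝ) ^ 2 * a k) ^ 2 + 2 * ((n:ℝ)^2 * w) * ((n:ℝ)^2 * a k) + ((n:ℝ)^2 * w)^2 := by
      intro k; ring
    rw [Finset.mul_sum]
    simp only [hexp]
    rw [Finset.sum_add_distrib, Finset.sum_add_distrib, ← Finset.mul_sum, ← Finset.mul_sum, ha]
    simp [Finset.sum_const, Finset.card_fin]
    ring
end

section
/- Let M be an n×n integer matrix and suppose M = N² for some n×n integer matrix N. Let N = a·1_n^T + 1_n·b^T + N_0 + (wt N)·E_n be the unique decomposition of N with a, b orthogonal to 1_n and N_0 ∈ S_n of weight 0. Then n²·(wt N), n²·a_j and n²·b_j are integers for all j, and they satisfy the quadratic equation n⁴·(wt M) = n·(n²·wt N)² + Σ_{j=1}^n (n²·a_j)·(n²·b_j). -/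
open Matrix Finset

/-- Quadratic form obstruction for `M = N²` with integer matrices: `n² wt N`, the
`n² aⱼ` and the `n² bⱼ` are integers satisfying
`n⁴ wt M = n (n² wt N)² + ∑ⱼ (n² aⱼ)(n² bⱼ)`. -/
theorem quadratic_obstruction_square {n : ℕ}
    (M N : Matrix (Fin n) (Fin n) ℤ) (hfact : M = N * N)
    (a b : Fin n → ℝ) (N0 : Matrix (Fin n) (Fin n) ℝ)
    (ha : ∑ i, a i = 0) (hb : ∑ i, b i = 0)
    (hN0 : IsTypeS N0) (hN0w : wt N0 = 0)
    (hdec : N.map (Int.cast : ℤ → ℝ) =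
      vecMulVec a (fun _ => 1) + vecMulVec (fun _ => 1) b + N0 +
        wt (N.map (Int.cast : ℤ → ℝ)) • En n) :
    (∃ z : ℤ, (n : ℝ) ^ 2 * wt (N.map (Int.cast : ℤ → ℝ)) = z) ∧
    (∀ j, ∃ z : ℤ, (n : ℝ) ^ 2 * a j = z) ∧
    (∀ j, ∃ z : ℤ, (n : ℝ) ^ 2 * b j = z) ∧
    (n : ℝ) ^ 4 * wt (M.map (Int.cast : ℤ → ℝ)) =
      n * ((n : ℝ) ^ 2 * wt (N.map (Int.cast : ℤ → ℝ))) ^ 2 +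
        ∑ j, ((n : ℝ) ^ 2 * a j) * ((n : ℝ) ^ 2 * b j) := by
  rcases Nat.eq_zero_or_pos n with hn | hn
  · subst hn
    exact ⟨⟨0, by simp [wt]⟩, fun j => j.elim0, fun j => j.elim0, by simp [wt]⟩
  have hn0 : (n : ℝ) ≠ 0 := Nat.cast_ne_zero.mpr hn.ne'
  -- notation
  set r : Fin n → ℝ := fun i => ∑ j, (N i j : ℝ) with hr_def
  set c : Fin n → ℝ := fun j => ∑ i, (N i j : ℝ) with hc_def
  set T : ℝ := ∑ i, ∑ j, (N i j : ℝ) with hT_def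
  set W : ℝ := wt (N.map (Int.cast : ℤ → ℝ)) with hW_def
  have hW : (n : ℝ) ^ 2 * W = T := by
    rw [hW_def, wt]
    field_simp [Matrix.map_apply]
    rfl
  -- entrywise decomposition
  have hentry : ∀ i j, (N i j : ℝ) = a i + b j + N0 i j + W := by
    intro i j
    have := congrFun (congrFun hdec i) j
    simpa [Matrix.map_apply, vecMulVec_apply, En, Matrix.add_apply,
      Matrix.smul_apply, smul_eq_mul] using this
  -- row/column sums of N0 vanish
  obtain ⟨w, hrow0, hcol0⟩ := hN0
  have hw : w = 0 := by
    have hsum : ∑ i, ∑ j, N0 i j = (n : ℝ) * ((n : ℝ) * w) := by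
      simp [hrow0, Finset.sum_const, Finset.card_univ, mul_comm]
    rw [wt, hsum] at hN0w
    field_simp at hN0w
    exact hN0w
  have hrow0' : ∀ i, ∑ j, N0 i j = 0 := fun i => by rw [hrow0 i, hw, mul_zero]
  have hcol0' : ∀ j, ∑ i, N0 i j = 0 := fun j => by rw [hcol0 j, hw, mul_zero]
  -- row and column sums of N
  have hr : ∀ i, r i = (n : ℝ) * a i + (n : ℝ) * W := by
    intro i
    have : r i = ∑ j, (a i + b j + N0 i j + W) :=
      Finset.sum_congr rfl fun j _ => hentry i j
    rw [this]
    simp [Finset.sum_add_distrib, hb, hrow0' i, Finset.sum_const, Finset.card_univ,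
      mul_comm]
  have hc : ∀ j, c j = (n : ℝ) * b j + (n : ℝ) * W := by
    intro j
    have : c j = ∑ i, (a i + b j + N0 i j + W) :=
      Finset.sum_congr rfl fun i _ => hentry i j
    rw [this]
    simp [Finset.sum_add_distrib, ha, hcol0' j, Finset.sum_const, Finset.card_univ,
      mul_comm]
  have haj : ∀ j, (n : ℝ) ^ 2 * a j = (n : ℝ) * r j - T := by
    intro j; rw [hr j]; rw [← hW]; ring
  have hbj : ∀ j, (n : ℝ) ^ 2 * b j = (n : ℝ) * c j - T := by
    intro j; rw [hc j]; rw [← hW]; ring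
  refine ⟨⟨∑ i, ∑ j, N i j, by rw [hW]; push_cast [hT_def]; rfl⟩, ?_, ?_, ?_⟩
  · intro j
    refine ⟨(n : ℤ) * (∑ k, N j k) - ∑ i, ∑ k, N i k, ?_⟩
    rw [haj j]; push_cast [hr_def, hT_def]; rfl
  · intro j
    refine ⟨(n : ℤ) * (∑ i, N i j) - ∑ i, ∑ k, N i k, ?_⟩
    rw [hbj j]; push_cast [hc_def, hT_def]; rfl
  -- the quadratic identity
  have hTc : ∑ j, c j = T := by rw [hT_def, hc_def]; rw [Finset.sum_comm]
  have hTr : ∑ j, r j = T := rfl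
  have key : ∑ i, ∑ j, ((M.map (Int.cast : ℤ → ℝ)) i j) = ∑ k, c k * r k := by
    subst hfact
    have h1 : ∀ i j, ((N * N) i j : ℝ) = ∑ k, (N i k : ℝ) * (N k j : ℝ) := by
      intro i j; push_cast [Matrix.mul_apply]; rfl
    calc ∑ i, ∑ j, (((N * N).map (Int.cast : ℤ → ℝ)) i j)
        = ∑ i, ∑ j, ∑ k, (N i k : ℝ) * (N k j : ℝ) := by
          simp only [Matrix.map_apply, h1]
      _ = ∑ i, ∑ k, (N i k : ℝ) * ∑ j, (N k j : ℝ) := by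
          refine Finset.sum_congr rfl fun i _ => ?_
          rw [Finset.sum_comm]
          exact Finset.sum_congr rfl fun k _ => (Finset.mul_sum _ _ _).symm
      _ = ∑ k, ∑ i, (N i k : ℝ) * ∑ j, (N k j : ℝ) := Finset.sum_comm
      _ = ∑ k, c k * r k := by
          exact Finset.sum_congr rfl fun k _ => (Finset.sum_mul _ _ _).symm
  have hLHS : (n : ℝ) ^ 4 * wt (M.map (Int.cast : ℤ → ℝ)) = (n : ℝ) ^ 2 * ∑ k, c k * r k := by
    rw [wt, key]; field_simp
  rw [hLHS, hW]
  simp_rw [haj, hbj]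
  have expand : ∑ j, ((n : ℝ) * r j - T) * ((n : ℝ) * c j - T) =
      (n : ℝ) ^ 2 * ∑ j, r j * c j - (n : ℝ) * T * (∑ j, c j)
        - (n : ℝ) * T * (∑ j, r j) + (n : ℝ) * T ^ 2 := by
    have h : ∀ j, ((n : ℝ) * r j - T) * ((n : ℝ) * c j - T) =
        (n : ℝ) ^ 2 * (r j * c j) - (n : ℝ) * T * c j - (n : ℝ) * T * r j + T ^ 2 := by
      intro j; ring
    rw [Finset.sum_congr rfl fun j _ => h j]
    rw [Finset.sum_add_distrib, Finset.sum_sub_distrib, Finset.sum_sub_distrib,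
      ← Finset.mul_sum, ← Finset.mul_sum, ← Finset.mul_sum, Finset.sum_const,
      Finset.card_univ, Fintype.card_fin, nsmul_eq_mul]
  rw [expand, hTc, hTr]
  have hcomm : ∑ k, c k * r k = ∑ k, r k * c k :=
    Finset.sum_congr rfl fun k _ => mul_comm _ _
  rw [hcomm]; ring
end

section
/- For every natural number n with n ∉ {1, 3}, there exists an n×n Latin square L = (ℓ_{i,j}) such that ℓ_{1,1} = ℓ_{2,2} = 1 and ℓ_{1,2} = ℓ_{2,1} = 2. -/
open Matrix Finset

/-- An `n × n` Latin square: a matrix with entries from `{1, …, n}` such that each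
symbol appears exactly once in each row and exactly once in each column. -/
def IsLatinSquare {n : ℕ} (L : Fin n → Fin n → ℕ) : Prop :=
  (∀ i j, L i j ∈ Finset.Icc 1 n) ∧
  (∀ i, Function.Injective (L i)) ∧
  (∀ j, Function.Injective fun i => L i j)

private lemma mod2aux (n x : ℕ) (hn : 0 < n) (h : x < 2 * n) :
    x % n = if x < n then x else x - n := by
  split_ifs with h1
  · exact Nat.mod_eq_of_lt h1
  · rw [Nat.mod_eq_sub_mod (le_of_not_gt h1)]
    exact Nat.mod_eq_of_lt (by omega)

/-! ### The odd case: a cyclic Latin square modified in its first three rows. -/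

private def LSr0 (n j : ℕ) : ℕ :=
  if j = n - 1 then 1 else if j = n - 2 then n - 1 else if j % 2 = 1 then j + 2 else j
private def LSr1 (n j : ℕ) : ℕ :=
  if j = n - 2 then 0 else if j = n - 1 then n - 1 else j + 1
private def LSr2 (n j : ℕ) : ℕ :=
  if j = n - 1 then 0 else if j % 2 = 1 then j else j + 2
private def LSM (n i j : ℕ) : ℕ :=
  if i = 0 then LSr0 n j else if i = 1 then LSr1 n j else if i = 2 then LSr2 n j
  else (i + j) % n
private def LSc (j : ℕ) : ℕ := if j = 0 then 1 else if j = 1 then 2 else if j = 2 then 0 else j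
private def LSf (s : ℕ) : ℕ := if s = 0 then 3 else if s = 3 then 0 else if s = 1 then 2
  else if s = 2 then 1 else s

private lemma LSf_inj (a b : ℕ) (h : LSf a = LSf b) : a = b := by
  simp only [LSf] at h; split_ifs at h <;> omega

private lemma LSc_inj (a b : ℕ) (h : LSc a = LSc b) : a = b := by
  simp only [LSc] at h; split_ifs at h <;> omega

private lemma LSc_lt (n j : ℕ) (h5 : 5 ≤ n) (hj : j < n) : LSc j < n := by
  simp only [LSc]; split_ifs <;> omega

private lemma LSf_lt (n s : ℕ) (h5 : 5 ≤ n) (hs : s < n) : LSf s < n := by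
  simp only [LSf]; split_ifs <;> omega

private lemma LSM_lt (n i j : ℕ) (h5 : 5 ≤ n) (hodd : n % 2 = 1) (hi : i < n) (hj : j < n) :
    LSM n i j < n := by
  have m1 := mod2aux n (i + j) (by omega) (by omega)
  simp only [LSM, LSr0, LSr1, LSr2, m1]
  split_ifs <;> omega

private lemma LSM_row_inj (n : ℕ) (h5 : 5 ≤ n) (hodd : n % 2 = 1) (i : ℕ) (hi : i < n)
    (j1 j2 : ℕ) (hj1 : j1 < n) (hj2 : j2 < n) (h : LSM n i j1 = LSM n i j2) : j1 = j2 := by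
  simp only [LSM] at h
  split_ifs at h
  · simp only [LSr0] at h; split_ifs at h <;> omega
  · simp only [LSr1] at h; split_ifs at h <;> omega
  · simp only [LSr2] at h; split_ifs at h <;> omega
  · rw [mod2aux n (i + j1) (by omega) (by omega),
      mod2aux n (i + j2) (by omega) (by omega)] at h
    split_ifs at h <;> omega

private lemma LSM_col_inj (n : ℕ) (h5 : 5 ≤ n) (hodd : n % 2 = 1) (j : ℕ) (hj : j < n)
    (i1 i2 : ℕ) (hi1 : i1 < n) (hi2 : i2 < n) (h : LSM n i1 j = LSM n i2 j) : i1 = i2 := by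
  have m1 := mod2aux n (i1 + j) (by omega) (by omega)
  have m2 := mod2aux n (i2 + j) (by omega) (by omega)
  simp only [LSM, LSr0, LSr1, LSr2, m1, m2] at h
  split_ifs at h <;> omega

private lemma aux_odd (n : ℕ) (h5 : 5 ≤ n) (hodd : n % 2 = 1) :
    ∃ L : Fin n → Fin n → ℕ, IsLatinSquare L ∧
      L ⟨0, by omega⟩ ⟨0, by omega⟩ = 1 ∧
      L ⟨1, by omega⟩ ⟨1, by omega⟩ = 1 ∧
      L ⟨0, by omega⟩ ⟨1, by omega⟩ = 2 ∧
      L ⟨1, by omega⟩ ⟨0, by omega⟩ = 2 := by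
  have hr01 : LSr0 n 1 = 3 := by
    simp only [LSr0]; rw [if_neg (by omega), if_neg (by omega), if_pos (by norm_num)]
  have hr02 : LSr0 n 2 = 2 := by
    simp only [LSr0]; rw [if_neg (by omega), if_neg (by omega), if_neg (by norm_num)]
  have hr11 : LSr1 n 1 = 2 := by
    simp only [LSr1]; rw [if_neg (by omega), if_neg (by omega)]
  have hr12 : LSr1 n 2 = 3 := by
    simp only [LSr1]; rw [if_neg (by omega), if_neg (by omega)]
  refine ⟨fun i j => LSf (LSM n i.1 (LSc j.1)) + 1, ⟨?_, ?_, ?_⟩, ?_, ?_, ?_, ?_⟩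
  · intro i j
    have h1 := LSf_lt n _ h5 (LSM_lt n i.1 (LSc j.1) h5 hodd i.isLt (LSc_lt n j.1 h5 j.isLt))
    simp only [Finset.mem_Icc]
    omega
  · intro i j1 j2 h
    simp only at h
    have h' : LSM n i.1 (LSc j1.1) = LSM n i.1 (LSc j2.1) := LSf_inj _ _ (by omega)
    have := LSc_inj _ _ (LSM_row_inj n h5 hodd i.1 i.isLt _ _
      (LSc_lt n j1.1 h5 j1.isLt) (LSc_lt n j2.1 h5 j2.isLt) h')
    exact Fin.ext this
  · intro j i1 i2 h
    simp only at h
    have h' : LSM n i1.1 (LSc j.1) = LSM n i2.1 (LSc j.1) := LSf_inj _ _ (by omega)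
    exact Fin.ext (LSM_col_inj n h5 hodd _ (LSc_lt n j.1 h5 j.isLt) _ _ i1.isLt i2.isLt h')
  · show LSf (LSM n 0 (LSc 0)) + 1 = 1
    have : LSc 0 = 1 := rfl
    rw [this]
    have : LSM n 0 1 = LSr0 n 1 := by simp [LSM]
    rw [this, hr01]
    rfl
  · show LSf (LSM n 1 (LSc 1)) + 1 = 1
    have : LSc 1 = 2 := rfl
    rw [this]
    have : LSM n 1 2 = LSr1 n 2 := by simp [LSM]
    rw [this, hr12]
    rfl
  · show LSf (LSM n 0 (LSc 1)) + 1 = 2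
    have : LSc 1 = 2 := rfl
    rw [this]
    have : LSM n 0 2 = LSr0 n 2 := by simp [LSM]
    rw [this, hr02]
    rfl
  · show LSf (LSM n 1 (LSc 0)) + 1 = 2
    have : LSc 0 = 1 := rfl
    rw [this]
    have : LSM n 1 1 = LSr1 n 1 := by simp [LSM]
    rw [this, hr11]
    rfl

/-! ### The even case: the Cayley table of `ℤ/(n/2) × ℤ/2`. -/

private lemma aux_even (n : ℕ) (h2 : 2 ≤ n) (he : n % 2 = 0) :
    ∃ L : Fin n → Fin n → ℕ, IsLatinSquare L ∧
      L ⟨0, by omega⟩ ⟨0, by omega⟩ = 1 ∧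
      L ⟨1, by omega⟩ ⟨1, by omega⟩ = 1 ∧
      L ⟨0, by omega⟩ ⟨1, by omega⟩ = 2 ∧
      L ⟨1, by omega⟩ ⟨0, by omega⟩ = 2 := by
  refine ⟨fun i j => 2 * ((i.1 / 2 + j.1 / 2) % (n / 2)) + (i.1 + j.1) % 2 + 1,
    ⟨?_, ?_, ?_⟩, ?_, ?_, ?_, ?_⟩
  · intro i j
    have hi := i.isLt; have hj := j.isLt
    have h1 : (i.1 / 2 + j.1 / 2) % (n / 2) < n / 2 := Nat.mod_lt _ (by omega)
    simp only [Finset.mem_Icc]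
    omega
  · intro i j1 j2 h
    have hi := i.isLt; have hj1 := j1.isLt; have hj2 := j2.isLt
    simp only at h
    rw [mod2aux (n / 2) (i.1 / 2 + j1.1 / 2) (by omega) (by omega),
      mod2aux (n / 2) (i.1 / 2 + j2.1 / 2) (by omega) (by omega)] at h
    apply Fin.ext
    split_ifs at h <;> omega
  · intro j i1 i2 h
    have hj := j.isLt; have hi1 := i1.isLt; have hi2 := i2.isLt
    simp only at h
    rw [mod2aux (n / 2) (i1.1 / 2 + j.1 / 2) (by omega) (by omega),
      mod2aux (n / 2) (i2.1 / 2 + j.1 / 2) (by omega) (by omega)] at h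
    apply Fin.ext
    split_ifs at h <;> omega
  · norm_num
  · norm_num
  · norm_num
  · norm_num

/-- For every `n ∈ ℕ \ {1, 3}` there is an `n × n` Latin square `L` with
`ℓ₁₁ = ℓ₂₂ = 1` and `ℓ₁₂ = ℓ₂₁ = 2`. -/
theorem exists_latin_square_with_corner_block (n : ℕ)
    (hn0 : 0 < n) (hn1 : n ≠ 1) (hn3 : n ≠ 3) :
    ∃ L : Fin n → Fin n → ℕ, IsLatinSquare L ∧
      L ⟨0, by omega⟩ ⟨0, by omega⟩ = 1 ∧
      L ⟨1, by omega⟩ ⟨1, by omega⟩ = 1 ∧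
      L ⟨0, by omega⟩ ⟨1, by omega⟩ = 2 ∧
      L ⟨1, by omega⟩ ⟨0, by omega⟩ = 2 := by
  rcases Nat.even_or_odd n with he | ho
  · have he' : n % 2 = 0 := Nat.even_iff.mp he
    obtain ⟨L, hL, a, b, c, d⟩ := aux_even n (by omega) he'
    exact ⟨L, hL, a, b, c, d⟩
  · have ho' : n % 2 = 1 := Nat.odd_iff.mp ho
    obtain ⟨L, hL, a, b, c, d⟩ := aux_odd n (by omega) ho'
    exact ⟨L, hL, a, b, c, d⟩
end
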